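/- Let (U_n)_{n≥1} be a sequence of i.i.d. nonnegative random variables with P(U_1 ≠ 0) > 0. If E[ln(1 + U_1)] < +∞ then limsup_{n→∞} U_n^{1/n} = 1 almost surely. -/

import Mathlib

open MeasureTheory ProbabilityTheory Filter Topology

lemma aux_tsum {Ω : Type*} [MeasurableSpace Ω] (P : Measure Ω) [IsProbabilityMeasure P]
    {X : Ω → ℝ} (hint : Integrable X P) (hnonneg : 0 ≤ X) :
    (∑' j : ℕ, P {ω | X ω ∈ Set.Ioi (j : ℝ)}) < ⊤ := by
  letI : MeasureSpace Ω := ⟨P⟩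
  haveI : IsProbabilityMeasure (ℙ : Measure Ω) := ‹_›
  exact ProbabilityTheory.tsum_prob_mem_Ioi_lt_top hint hnonneg

theorem stmt11 {Ω : Type*} [MeasurableSpace Ω] (P : Measure Ω) [IsProbabilityMeasure P]
    (U : ℕ → Ω → ℝ) (hm : ∀ n, Measurable (U n)) (hpos : ∀ n ω, 0 ≤ U n ω)
    (hiid : iIndepFun U P)
    (hident : ∀ n, Measure.map (U n) P = Measure.map (U 0) P)
    (hne : 0 < P {ω | U 0 ω ≠ 0})
    (hint : ∫⁻ ω, ENNReal.ofReal (Real.log (1 + U 0 ω)) ∂P < ⊤) :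
    ∀ᵐ ω ∂P,
      limsup (fun n : ℕ => (ENNReal.ofReal (U n ω)) ^ ((n : ℝ)⁻¹)) atTop = 1 := by
  set Y : Ω → ℝ := fun ω => Real.log (1 + U 0 ω) with hY
  have hYm : Measurable Y := Real.measurable_log.comp (measurable_const.add (hm 0))
  have hYnn : ∀ ω, 0 ≤ Y ω := fun ω => Real.log_nonneg (by linarith [hpos 0 ω])
  have hYint : Integrable Y P := by
    refine ⟨hYm.aestronglyMeasurable, ?_⟩
    rw [hasFiniteIntegral_iff_ofReal (ae_of_all _ hYnn)]
    exact hint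
  have hmap : ∀ (n : ℕ) (A : Set ℝ), MeasurableSet A → P (U n ⁻¹' A) = P (U 0 ⁻¹' A) := by
    intro n A hA
    rw [← Measure.map_apply (hm n) hA, hident n, Measure.map_apply (hm 0) hA]
  -- find c > 0 with positive probability of exceeding it
  obtain ⟨c, hc, hPc⟩ : ∃ c : ℝ, 0 < c ∧ 0 < P (U 0 ⁻¹' Set.Ioi c) := by
    by_contra h
    push_neg at h
    have h0 : ∀ k : ℕ, P (U 0 ⁻¹' Set.Ioi (((k : ℝ) + 1)⁻¹)) = 0 := fun k =>
      le_antisymm (h _ (by positivity)) zero_le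
    have hsub : {ω | U 0 ω ≠ 0} ⊆ ⋃ k : ℕ, U 0 ⁻¹' Set.Ioi (((k : ℝ) + 1)⁻¹) := by
      intro ω hω
      have hU : 0 < U 0 ω := lt_of_le_of_ne (hpos 0 ω) (Ne.symm hω)
      obtain ⟨k, hk⟩ := exists_nat_one_div_lt hU
      exact Set.mem_iUnion.2 ⟨k, by simpa [one_div] using hk⟩
    have : P {ω | U 0 ω ≠ 0} = 0 :=
      measure_mono_null hsub (measure_iUnion_null h0)
    exact absurd this hne.ne'
  -- second Borel-Cantelli for the events {U n > c}
  set s : ℕ → Set Ω := fun n => U n ⁻¹' Set.Ioi c with hs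
  have hsm : ∀ n, MeasurableSet (s n) := fun n => (hm n) measurableSet_Ioi
  have hsind : iIndepSet s P := by
    rw [iIndepSet_iff_meas_biInter hsm]
    intro S
    exact hiid.measure_inter_preimage_eq_mul S (fun i _ => measurableSet_Ioi)
  have hstop : (∑' n, P (s n)) = ⊤ := by
    have he : ∀ n, P (s n) = P (s 0) := fun n => hmap n _ measurableSet_Ioi
    calc (∑' n, P (s n)) = ∑' _ : ℕ, P (s 0) := tsum_congr he
      _ = ⊤ := ENNReal.tsum_const_eq_top_of_ne_zero hPc.ne'
  have hBC2 : P (limsup s atTop) = 1 := measure_limsup_eq_one hsm hsind hstop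
  have hae1 : ∀ᵐ ω ∂P, ∃ᶠ n in atTop, c < U n ω := by
    have hmeas : MeasurableSet (limsup s atTop) :=
      MeasurableSet.measurableSet_limsup (fun n => hsm n)
    have : P (limsup s atTop)ᶜ = 0 := by
      rw [measure_compl hmeas (measure_ne_top _ _), hBC2, measure_univ, tsub_self]
    rw [ae_iff]
    convert this using 2
    ext ω
    simp only [Set.mem_compl_iff, Set.mem_setOf_eq, mem_limsup_iff_frequently_mem]
    rfl
  -- first Borel-Cantelli for each k
  have hae2 : ∀ k : ℕ, ∀ᵐ ω ∂P,
      ∀ᶠ n in atTop, Real.log (1 + U n ω) ≤ (n : ℝ) / ((k : ℝ) + 1) := by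
    intro k
    have hXint : Integrable (fun ω => ((k : ℝ) + 1) * Y ω) P := hYint.const_mul _
    have hXnn : 0 ≤ fun ω => ((k : ℝ) + 1) * Y ω := fun ω =>
      mul_nonneg (by positivity) (hYnn ω)
    have htsum := aux_tsum P hXint hXnn
    have hA : ∀ n : ℕ, MeasurableSet {x : ℝ | (n : ℝ) / ((k : ℝ) + 1) < Real.log (1 + x)} :=
      fun n => measurableSet_lt measurable_const
        (Real.measurable_log.comp (measurable_const.add measurable_id))
    have e1 : ∀ n : ℕ, P {ω | (n : ℝ) / ((k : ℝ) + 1) < Real.log (1 + U n ω)}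
        = P {ω | ((k : ℝ) + 1) * Y ω ∈ Set.Ioi (n : ℝ)} := by
      intro n
      rw [show {ω | (n : ℝ) / ((k : ℝ) + 1) < Real.log (1 + U n ω)}
          = U n ⁻¹' {x | (n : ℝ) / ((k : ℝ) + 1) < Real.log (1 + x)} from rfl,
        hmap n _ (hA n)]
      congr 1
      ext ω
      simp only [Set.mem_preimage, Set.mem_setOf_eq, Set.mem_Ioi, hY]
      rw [div_lt_iff₀ (by positivity), mul_comm]
    have key : (∑' n : ℕ, P {ω | (n : ℝ) / ((k : ℝ) + 1) < Real.log (1 + U n ω)}) ≠ ⊤ := by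
      rw [tsum_congr e1]
      exact htsum.ne
    have hzero := measure_setOf_frequently_eq_zero key
    rw [ae_iff]
    convert hzero using 3
    simp only [not_eventually, not_le]
  filter_upwards [hae1, ae_all_iff.2 hae2] with ω h1 h2
  -- deterministic part
  set u : ℕ → ENNReal := fun n => (ENNReal.ofReal (U n ω)) ^ ((n : ℝ)⁻¹) with hu
  have hub : ∀ k : ℕ, limsup u atTop ≤ ENNReal.ofReal (Real.exp (((k : ℝ) + 1)⁻¹)) := by
    intro k
    refine limsup_le_of_le (by isBoundedDefault) ?_
    filter_upwards [h2 k, eventually_gt_atTop 0] with n hn hn0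
    have h1U : (0 : ℝ) < 1 + U n ω := by linarith [hpos n ω]
    have hUle : U n ω ≤ Real.exp ((n : ℝ) / ((k : ℝ) + 1)) := by
      have h2' : 1 + U n ω ≤ Real.exp ((n : ℝ) / ((k : ℝ) + 1)) :=
        (Real.log_le_iff_le_exp h1U).1 hn
      linarith
    have hn0' : (n : ℝ) ≠ 0 := Nat.cast_ne_zero.2 hn0.ne'
    calc u n ≤ (ENNReal.ofReal (Real.exp ((n : ℝ) / ((k : ℝ) + 1)))) ^ ((n : ℝ)⁻¹) :=
        ENNReal.rpow_le_rpow (ENNReal.ofReal_le_ofReal hUle) (by positivity)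
      _ = ENNReal.ofReal (Real.exp ((n : ℝ) / ((k : ℝ) + 1)) ^ ((n : ℝ)⁻¹)) :=
        ENNReal.ofReal_rpow_of_pos (Real.exp_pos _)
      _ = ENNReal.ofReal (Real.exp (((k : ℝ) + 1)⁻¹)) := by
        rw [Real.rpow_def_of_pos (Real.exp_pos _), Real.log_exp]
        congr 1
        field_simp
  have h1le : limsup u atTop ≤ 1 := by
    have htendR : Tendsto (fun k : ℕ => Real.exp (((k : ℝ) + 1)⁻¹)) atTop (𝓝 1) := by
      have h0 : Tendsto (fun k : ℕ => ((k : ℝ) + 1)⁻¹) atTop (𝓝 0) := by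
        simpa only [one_div] using tendsto_one_div_add_atTop_nhds_zero_nat (𝕜 := ℝ)
      simpa [Function.comp_def] using (Real.continuous_exp.continuousAt.tendsto.comp h0)
    have htend : Tendsto (fun k : ℕ => ENNReal.ofReal (Real.exp (((k : ℝ) + 1)⁻¹))) atTop
        (𝓝 1) := by
      simpa [Function.comp_def] using (ENNReal.continuous_ofReal.continuousAt.tendsto.comp htendR)
    exact ge_of_tendsto' htend hub
  have h1ge : 1 ≤ limsup u atTop := by
    refine le_of_forall_lt_imp_le_of_dense fun a ha => ?_
    have htendR : Tendsto (fun n : ℕ => c ^ ((n : ℝ)⁻¹)) atTop (𝓝 1) := by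
      have h0 : Tendsto (fun n : ℕ => Real.log c * (n : ℝ)⁻¹) atTop (𝓝 0) := by
        simpa using (tendsto_inv_atTop_nhds_zero_nat.const_mul (Real.log c))
      have := (Real.continuous_exp.continuousAt.tendsto.comp h0)
      simp only [Function.comp_def, Real.exp_zero] at this
      refine this.congr fun n => ?_
      rw [Real.rpow_def_of_pos hc]
    have htend : Tendsto (fun n : ℕ => ENNReal.ofReal (c ^ ((n : ℝ)⁻¹))) atTop (𝓝 1) := by
      simpa [Function.comp_def] using (ENNReal.continuous_ofReal.continuousAt.tendsto.comp htendR)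
    have hev : ∀ᶠ n : ℕ in atTop, a < ENNReal.ofReal (c ^ ((n : ℝ)⁻¹)) :=
      htend.eventually (eventually_gt_nhds ha)
    refine le_limsup_of_frequently_le' ?_
    refine (h1.and_eventually hev).mono fun n ⟨hcn, han⟩ => ?_
    calc a ≤ ENNReal.ofReal (c ^ ((n : ℝ)⁻¹)) := han.le
      _ = (ENNReal.ofReal c) ^ ((n : ℝ)⁻¹) := (ENNReal.ofReal_rpow_of_pos hc).symm
      _ ≤ u n := ENNReal.rpow_le_rpow (ENNReal.ofReal_le_ofReal hcn.le) (by positivity)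
  exact le_antisymm h1le h1ge
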